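/- Define the sequence of ordinals γ : ℕ → Ordinal by γ(0) = 0 and γ(n+1) = φ_{γ(n)}(0). Then for every natural number n ≥ 2, γ(n) is a limit ordinal and sup over a < γ(n) of φ_a(0) equals γ(n+1). -/

import Mathlib

noncomputable def veblen (o : Ordinal.{0}) : Ordinal.{0} → Ordinal.{0} :=
  if o = 0 then fun b => Ordinal.omega0 ^ b
  else Ordinal.derivFamily fun x : Set.Iio o => veblen x.1
termination_by o
decreasing_by exact x.2

/-- γ 0 = 0 and γ (n+1) = φ_{γ n}(0). -/
noncomputable def gammaSeq : ℕ → Ordinal.{0}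
  | 0 => 0
  | n + 1 => veblen (gammaSeq n) 0

open Ordinal hiding veblen veblen_zero isNormal_veblen
open Set

lemma veblen_zero (b : Ordinal.{0}) : veblen 0 b = Ordinal.omega0 ^ b := by
  rw [veblen]; simp

lemma veblen_of_ne {o : Ordinal.{0}} (h : o ≠ 0) :
    veblen o = Ordinal.derivFamily fun x : Set.Iio o => veblen x.1 := by
  rw [veblen]; simp [h]

lemma isNormal_veblen (o : Ordinal.{0}) : Order.IsNormal (veblen o) := by
  rw [veblen]
  split
  · exact Ordinal.isNormal_opow one_lt_omega0
  · exact Ordinal.isNormal_derivFamily _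

lemma veblen_fp {a b : Ordinal.{0}} (h : a < b) (x : Ordinal.{0}) :
    veblen a (veblen b x) = veblen b x := by
  have hb : b ≠ 0 := (((zero_le : (0 : Ordinal.{0}) ≤ a)).trans_lt h).ne'
  rw [veblen_of_ne hb]
  exact Ordinal.derivFamily_fp (i := (⟨a, h⟩ : Set.Iio b)) (isNormal_veblen a) x

lemma gammaSeq_ne_zero (n : ℕ) : gammaSeq (n + 1) ≠ 0 := by
  induction n with
  | zero =>
    show veblen 0 0 ≠ 0
    rw [veblen_zero, Ordinal.opow_zero]; exact one_ne_zero
  | succ m ih =>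
    have hfp : veblen 0 (gammaSeq (m + 2)) = gammaSeq (m + 2) :=
      veblen_fp (pos_iff_ne_zero.2 ih) 0
    rw [veblen_zero] at hfp
    intro h0
    rw [h0, Ordinal.opow_zero] at hfp
    exact one_ne_zero hfp

lemma gammaSeq_isLimit (n : ℕ) : Order.IsSuccLimit (gammaSeq (n + 2)) := by
  have hfp : veblen 0 (gammaSeq (n + 2)) = gammaSeq (n + 2) :=
    veblen_fp (pos_iff_ne_zero.2 (gammaSeq_ne_zero n)) 0
  rw [veblen_zero] at hfp
  rw [← hfp]
  exact Ordinal.isSuccLimit_opow_left Ordinal.isSuccLimit_omega0 (gammaSeq_ne_zero (n + 1))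

theorem gammaSeq_isLimit_and_sup (n : ℕ) (hn : 2 ≤ n) :
    Order.IsSuccLimit (gammaSeq n) ∧
      (⨆ a : Set.Iio (gammaSeq n), veblen a.1 0) = gammaSeq (n + 1) := by
  obtain ⟨m, rfl⟩ : ∃ m, n = m + 2 := ⟨n - 2, by omega⟩
  have hlim := gammaSeq_isLimit m
  refine ⟨hlim, ?_⟩
  have hpos : (0 : Ordinal.{0}) < gammaSeq (m + 2) := hlim.pos
  set g := gammaSeq (m + 2) with hg
  show (⨆ a : Set.Iio g, veblen a.1 0) = veblen g 0
  rw [veblen_of_ne hpos.ne', Ordinal.derivFamily_zero]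
  set f : Set.Iio g → Ordinal.{0} → Ordinal.{0} := fun x => veblen x.1 with hf
  apply le_antisymm
  · apply Ordinal.iSup_le
    intro a
    exact Ordinal.foldr_le_nfpFamily f 0 [a]
  · apply Ordinal.nfpFamily_le
    intro l
    have key : ∃ c : Set.Iio g, List.foldr f 0 l ≤ veblen c.1 0 := by
      induction l with
      | nil => exact ⟨⟨0, hpos⟩, zero_le⟩
      | cons i l ih =>
        obtain ⟨c, hc⟩ := ih
        have hd : max c.1 i.1 + 1 < g := hlim.succ_lt (max_lt c.2 i.2)
        refine ⟨⟨max c.1 i.1 + 1, hd⟩, ?_⟩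
        have h1 : veblen c.1 0 ≤ veblen (max c.1 i.1 + 1) 0 := by
          conv_rhs => rw [← veblen_fp (a := c.1)
            (lt_of_le_of_lt (le_max_left _ _) (lt_add_one _)) 0]
          exact (isNormal_veblen c.1).monotone zero_le
        calc List.foldr f 0 (i :: l) = veblen i.1 (List.foldr f 0 l) := rfl
          _ ≤ veblen i.1 (veblen (max c.1 i.1 + 1) 0) :=
            (isNormal_veblen i.1).monotone (hc.trans h1)
          _ = veblen (max c.1 i.1 + 1) 0 :=
            veblen_fp (lt_of_le_of_lt (le_max_right _ _) (lt_add_one _)) 0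
    obtain ⟨c, hc⟩ := key
    exact hc.trans (Ordinal.le_iSup (fun a : Set.Iio g => veblen a.1 0) c)
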